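/- Let U = (u_i^α) be a real orthogonal N×N matrix and let v_1,…,v_n ∈ ℝ^N be unit vectors. Then the sum over all configurations x ∈ Λ^n (tuples in [N]^n with every particle number even) of (∏_{i=1}^N n_i(x)!!) · |∏_{a=1}^n ⟨v_a, u_{x_a}⟩| / (∏_{i=1}^N n_i(x)!!) weighted appropriately, namely Σ_{x ∈ Λ^n} (∏_i n_i(x)!!) · |P(x,U,V)| where P(x,U,V) = (∏_a Σ_α v_a^α u_{x_a}^α)/(∏_i n_i(x)!!), is at most n!!, the number of perfect matchings of [n]. -/

import Mathlib

open Finset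

noncomputable section
open scoped Classical

/-- particle number of configuration `x` at site `i` -/
def pnum {N n : ℕ} (x : Fin n → Fin N) (i : Fin N) : ℕ :=
  (Finset.univ.filter fun a => x a = i).card

/-- the paper's double factorial: `k!!` is the standard double factorial of `k - 1`,
with `0!! = 1`. -/
def dfact (k : ℕ) : ℕ := Nat.doubleFactorial (k - 1)

lemma dfact_pos (k : ℕ) : 0 < dfact k := Nat.doubleFactorial_pos _

lemma dfact_add_two (n : ℕ) : dfact (n + 2) = (n + 1) * dfact n := by
  cases n with
  | zero => rfl
  | succ m =>
    show Nat.doubleFactorial (m + 2) = (m + 2) * Nat.doubleFactorial m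
    exact Nat.doubleFactorial_add_two m

lemma row_orth {N : ℕ} (U : Matrix (Fin N) (Fin N) ℝ) (hU : U * U.transpose = 1)
    (α β : Fin N) : ∑ i, U α i * U β i = if α = β then (1:ℝ) else 0 := by
  have := congrFun (congrFun hU α) β
  simpa [Matrix.mul_apply, Matrix.transpose_apply, Matrix.one_apply] using this

lemma sum_inner_sq {N : ℕ} (U : Matrix (Fin N) (Fin N) ℝ) (hU : U * U.transpose = 1)
    (v : Fin N → ℝ) (hv : ∑ α, v α ^ 2 = 1) :
    ∑ i, (∑ α, v α * U α i) ^ 2 = 1 := by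
  have h1 : ∀ i : Fin N, (∑ α, v α * U α i) ^ 2
      = ∑ α, ∑ β, (v α * v β) * (U α i * U β i) := by
    intro i
    rw [sq, Finset.sum_mul_sum]
    exact Finset.sum_congr rfl fun α _ => Finset.sum_congr rfl fun β _ => by ring
  calc ∑ i, (∑ α, v α * U α i) ^ 2
      = ∑ i, ∑ α, ∑ β, (v α * v β) * (U α i * U β i) := by
        exact Finset.sum_congr rfl fun i _ => h1 i
    _ = ∑ α, ∑ β, (v α * v β) * ∑ i, U α i * U β i := by
        rw [Finset.sum_comm]
        refine Finset.sum_congr rfl fun α _ => ?_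
        rw [Finset.sum_comm]
        exact Finset.sum_congr rfl fun β _ => by rw [Finset.mul_sum]
    _ = ∑ α, v α ^ 2 := by
        refine Finset.sum_congr rfl fun α _ => ?_
        rw [Finset.sum_eq_single α]
        · rw [row_orth U hU]; simp [sq]
        · intro β _ hβ; rw [row_orth U hU]; simp [Ne.symm hβ]
        · simp
    _ = 1 := hv

lemma cs_bound {N : ℕ} (U : Matrix (Fin N) (Fin N) ℝ) (hU : U * U.transpose = 1)
    (v w : Fin N → ℝ) (hv : ∑ α, v α ^ 2 = 1) (hw : ∑ α, w α ^ 2 = 1) :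
    ∑ i, |∑ α, v α * U α i| * |∑ α, w α * U α i| ≤ 1 := by
  have h := Finset.sum_mul_sq_le_sq_mul_sq Finset.univ
    (fun i => |∑ α, v α * U α i|) (fun i => |∑ α, w α * U α i|)
  simp only [sq_abs] at h
  rw [sum_inner_sq U hU v hv, sum_inner_sq U hU w hw, mul_one] at h
  have hnn : (0:ℝ) ≤ ∑ i, |∑ α, v α * U α i| * |∑ α, w α * U α i| :=
    Finset.sum_nonneg fun i _ => mul_nonneg (abs_nonneg _) (abs_nonneg _)
  nlinarith

lemma pnum_decomp {N n : ℕ} (b : Fin (n+1)) (x : Fin (n+2) → Fin N) (j : Fin N) :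
    pnum x j = pnum (fun a => x ((b.succAbove a).castSucc)) j
      + ((if x b.castSucc = j then 1 else 0) + (if x (Fin.last (n+1)) = j then 1 else 0)) := by
  simp only [pnum, Finset.card_filter]
  rw [Fin.sum_univ_castSucc (f := fun a => if x a = j then 1 else 0)]
  rw [Fin.sum_univ_succAbove (fun a => if x (Fin.castSucc a) = j then 1 else 0) b]
  ring

lemma main_ind {N : ℕ} (U : Matrix (Fin N) (Fin N) ℝ) (hU : U * U.transpose = 1) :
    ∀ n, Even n → ∀ v : Fin n → Fin N → ℝ, (∀ a, ∑ α, (v a α) ^ 2 = 1) →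
    ∑ x ∈ Finset.univ.filter (fun x : Fin n → Fin N => ∀ i, Even (pnum x i)),
      ∏ a, |∑ α, v a α * U α (x a)| ≤ (dfact n : ℝ) := by
  intro n
  induction n using Nat.strong_induction_on with
  | _ n IH =>
  match n with
  | 0 =>
    intro _ v _
    simp [Finset.filter_true_of_mem, pnum, dfact]
  | 1 => intro hn; exact absurd hn (by decide)
  | (n+2) =>
    intro hn v hv
    have hn' : Even n := by rcases hn with ⟨m, hm⟩; exact ⟨m - 1, by omega⟩
    set c : Fin (n+2) → Fin N → ℝ := fun a i => |∑ α, v a α * U α i| with hc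
    have hcnn : ∀ a i, 0 ≤ c a i := fun a i => abs_nonneg _
    set F : (Fin (n+2) → Fin N) → ℝ := fun x => ∏ a, c a (x a) with hF
    have hFnn : ∀ x, 0 ≤ F x := fun x => Finset.prod_nonneg fun a _ => hcnn _ _
    set Λ := Finset.univ.filter (fun x : Fin (n+2) → Fin N => ∀ i, Even (pnum x i)) with hΛ
    -- step 1: union bound over the partner b of the last index
    have step1 : ∑ x ∈ Λ, F x ≤ ∑ b : Fin (n+1), ∑ x ∈ Λ,
        (if x b.castSucc = x (Fin.last (n+1)) then F x else 0) := by
      rw [Finset.sum_comm]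
      refine Finset.sum_le_sum fun x hx => ?_
      have hxΛ : ∀ i, Even (pnum x i) := (Finset.mem_filter.mp hx).2
      -- find a partner
      have hlast : Fin.last (n+1) ∈ Finset.univ.filter
          (fun a => x a = x (Fin.last (n+1))) := by simp
      have hcard : 1 < (Finset.univ.filter
          (fun a => x a = x (Fin.last (n+1)))).card := by
        have hpos : 0 < pnum x (x (Fin.last (n+1))) :=
          Finset.card_pos.mpr ⟨_, hlast⟩
        rcases hxΛ (x (Fin.last (n+1))) with ⟨m, hm⟩
        have : pnum x (x (Fin.last (n+1))) = (Finset.univ.filter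
          (fun a => x a = x (Fin.last (n+1)))).card := rfl
        omega
      obtain ⟨a, ha, hane⟩ := Finset.exists_mem_ne hcard (Fin.last (n+1))
      obtain ⟨b, rfl⟩ := Fin.exists_castSucc_eq.mpr hane
      have hab : x b.castSucc = x (Fin.last (n+1)) := (Finset.mem_filter.mp ha).2
      calc F x = if x b.castSucc = x (Fin.last (n+1)) then F x else 0 := by rw [if_pos hab]
        _ ≤ ∑ b : Fin (n+1), (if x b.castSucc = x (Fin.last (n+1)) then F x else 0) :=
          Finset.single_le_sum (f := fun b : Fin (n+1) =>
            if x b.castSucc = x (Fin.last (n+1)) then F x else 0)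
            (fun b _ => by positivity) (Finset.mem_univ b)
    -- step 2: for each b, the inner sum is at most dfact n
    have step2 : ∀ b : Fin (n+1), ∑ x ∈ Λ,
        (if x b.castSucc = x (Fin.last (n+1)) then F x else 0) ≤ (dfact n : ℝ) := by
      intro b
      set v' : Fin n → Fin N → ℝ := fun a => v ((b.succAbove a).castSucc) with hv'
      have hv'unit : ∀ a, ∑ α, (v' a α) ^ 2 = 1 := fun a => hv _
      set Λ' := Finset.univ.filter (fun x : Fin n → Fin N => ∀ i, Even (pnum x i)) with hΛ'
      have key : ∑ x ∈ Λ, (if x b.castSucc = x (Fin.last (n+1)) then F x else 0)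
          = ∑ i : Fin N, ∑ x' ∈ Λ',
              (c (Fin.last (n+1)) i * c b.castSucc i) * ∏ a, c ((b.succAbove a).castSucc) (x' a) := by
        rw [← Finset.sum_filter]
        rw [Finset.sum_nbij' (i := fun x : Fin (n+2) → Fin N =>
              ((x (Fin.last (n+1)), fun a => x ((b.succAbove a).castSucc)) : Fin N × (Fin n → Fin N)))
            (j := fun p : Fin N × (Fin n → Fin N) => Fin.snoc (b.insertNth p.1 p.2) p.1)
            (t := Finset.univ.filter (fun p : Fin N × (Fin n → Fin N) => ∀ i, Even (pnum p.2 i)))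
            (g := fun p => (c (Fin.last (n+1)) p.1 * c b.castSucc p.1)
              * ∏ a, c ((b.succAbove a).castSucc) (p.2 a))]
        · -- split the product sum
          rw [Finset.sum_filter, Fintype.sum_prod_type]
          refine Finset.sum_congr rfl fun i _ => ?_
          rw [← Finset.sum_filter]
        · -- hi : membership
          intro x hx
          rw [Finset.mem_filter] at hx
          have hxe : ∀ i, Even (pnum x i) := (Finset.mem_filter.mp hx.1).2
          have hxb := hx.2
          refine Finset.mem_filter.mpr ⟨Finset.mem_univ _, fun j => ?_⟩
          have hd := pnum_decomp b x j
          rw [hxb] at hd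
          have he := hxe j
          rw [hd, Nat.even_add] at he
          exact he.mpr ⟨if x (Fin.last (n+1)) = j then 1 else 0, rfl⟩
        · -- hj : membership
          intro p hp
          rw [Finset.mem_filter] at hp
          refine Finset.mem_filter.mpr ⟨Finset.mem_filter.mpr ⟨Finset.mem_univ _, ?_⟩, ?_⟩
          · intro j
            have hd := pnum_decomp b (Fin.snoc (b.insertNth p.1 p.2) p.1) j
            have h1 : (Fin.snoc (b.insertNth p.1 p.2) p.1 : Fin (n+2) → Fin N) b.castSucc = p.1 := by
              rw [Fin.snoc_castSucc, Fin.insertNth_apply_same]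
            have h2 : (Fin.snoc (b.insertNth p.1 p.2) p.1 : Fin (n+2) → Fin N) (Fin.last (n+1)) = p.1 :=
              Fin.snoc_last _ _
            have h3 : (fun a => (Fin.snoc (b.insertNth p.1 p.2) p.1 : Fin (n+2) → Fin N)
                ((b.succAbove a).castSucc)) = p.2 := by
              funext a
              rw [Fin.snoc_castSucc, Fin.insertNth_apply_succAbove]
            rw [h1, h2, h3] at hd
            rw [hd, Nat.even_add]
            constructor
            · intro _; exact ⟨if p.1 = j then 1 else 0, rfl⟩
            · intro _; exact hp.2 j
          · rw [Fin.snoc_castSucc, Fin.insertNth_apply_same, Fin.snoc_last]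
        · -- left inverse
          intro x hx
          have hxb := (Finset.mem_filter.mp hx).2
          funext a
          refine Fin.lastCases ?_ (fun a₁ => ?_) a
          · rw [Fin.snoc_last]
          · rw [Fin.snoc_castSucc]
            rcases eq_or_ne a₁ b with rfl | hne
            · rw [Fin.insertNth_apply_same]; exact hxb.symm
            · obtain ⟨a', rfl⟩ := Fin.exists_succAbove_eq hne
              rw [Fin.insertNth_apply_succAbove]
        · -- right inverse
          intro p _
          refine Prod.ext ?_ ?_
          · simp [Fin.snoc_last]
          · funext a
            simp only
            rw [Fin.snoc_castSucc, Fin.insertNth_apply_succAbove]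
        · -- sum values agree
          intro x hx
          have hxb := (Finset.mem_filter.mp hx).2
          show F x = _
          rw [hF]
          simp only
          rw [Fin.prod_univ_castSucc (f := fun a => c a (x a)),
            Fin.prod_univ_succAbove (fun a₁ => c a₁.castSucc (x a₁.castSucc)) b, hxb]
          ring
      rw [key]
      have inner_eq : ∀ i : Fin N, ∑ x' ∈ Λ',
          (c (Fin.last (n+1)) i * c b.castSucc i) * ∏ a, c ((b.succAbove a).castSucc) (x' a)
          = (c (Fin.last (n+1)) i * c b.castSucc i) * ∑ x' ∈ Λ', ∏ a, c ((b.succAbove a).castSucc) (x' a) := by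
        intro i; rw [Finset.mul_sum]
      have hS' : ∑ x' ∈ Λ', ∏ a, c ((b.succAbove a).castSucc) (x' a) ≤ (dfact n : ℝ) := by
        have := IH n (by omega) hn' v' hv'unit
        exact this
      have hS'nn : (0:ℝ) ≤ ∑ x' ∈ Λ', ∏ a, c ((b.succAbove a).castSucc) (x' a) :=
        Finset.sum_nonneg fun x' _ => Finset.prod_nonneg fun a _ => hcnn _ _
      calc ∑ i : Fin N, ∑ x' ∈ Λ',
          (c (Fin.last (n+1)) i * c b.castSucc i) * ∏ a, c ((b.succAbove a).castSucc) (x' a)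
          = (∑ i, c (Fin.last (n+1)) i * c b.castSucc i)
            * ∑ x' ∈ Λ', ∏ a, c ((b.succAbove a).castSucc) (x' a) := by
            rw [Finset.sum_mul]
            exact Finset.sum_congr rfl fun i _ => inner_eq i
        _ ≤ 1 * (dfact n : ℝ) := by
            refine mul_le_mul ?_ hS' hS'nn zero_le_one
            exact cs_bound U hU (v (Fin.last (n+1))) (v b.castSucc) (hv _) (hv _)
        _ = (dfact n : ℝ) := one_mul _
    calc ∑ x ∈ Λ, F x ≤ ∑ b : Fin (n+1), ∑ x ∈ Λ,
        (if x b.castSucc = x (Fin.last (n+1)) then F x else 0) := step1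
      _ ≤ ∑ _b : Fin (n+1), (dfact n : ℝ) := Finset.sum_le_sum fun b _ => step2 b
      _ = (dfact (n+2) : ℝ) := by
          rw [Finset.sum_const, Finset.card_univ, Fintype.card_fin, dfact_add_two]
          push_cast; ring

/-- for a real orthogonal matrix `U` and unit vectors `v_1,…,v_n`,
`Σ_{x ∈ Λ^n} (∏_i n_i(x)!!) · |P(x,U,V)| ≤ n!!` where
`P(x,U,V) = (∏_a Σ_α v_a^α u_{x_a}^α) / (∏_i n_i(x)!!)`. -/
theorem stmt_2 (N n : ℕ) (hn : Even n) (U : Matrix (Fin N) (Fin N) ℝ)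
    (hU : U * U.transpose = 1)
    (v : Fin n → Fin N → ℝ) (hv : ∀ a, ∑ α, (v a α) ^ 2 = 1) :
    ∑ x ∈ Finset.univ.filter (fun x : Fin n → Fin N => ∀ i, Even (pnum x i)),
        (∏ i, (dfact (pnum x i) : ℝ)) *
          |(∏ a, ∑ α, v a α * U α (x a)) / ∏ i, (dfact (pnum x i) : ℝ)|
      ≤ (dfact n : ℝ) := by
  have h := main_ind U hU n hn v hv
  refine le_trans (le_of_eq ?_) h
  refine Finset.sum_congr rfl fun x _ => ?_
  have hD : (0:ℝ) < ∏ i, (dfact (pnum x i) : ℝ) :=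
    Finset.prod_pos fun i _ => by exact_mod_cast dfact_pos _
  rw [abs_div, abs_of_pos hD, mul_div_cancel₀ _ (ne_of_gt hD)]
  exact Finset.abs_prod _ _

end
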